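/- Let p be an odd prime and i ≥ 1 an integer. Then Σ_{j=0}^{p-2i} B_j · C(j+2i-1, j) · G_{p-1}^(j+2i-1) · p^j = 0, where the equality holds in the rational numbers (the sum is finite since G_{p-1}^(m) = 0 for m > p-1). -/

import Mathlib

/-- `G_n^(k)`: the `k`-th elementary symmetric function of `1, 1/2, ..., 1/n`. -/
def genG (n k : ℕ) : ℚ :=
  ∑ s ∈ Finset.powersetCard k (Finset.range n), ∏ i ∈ s, (1 : ℚ) / (i + 1)

namespace BernoulliGenG

open Polynomial Finset

/-- The polynomial `∏_{i=1}^{n} (X/i + 1)`, whose `k`-th coefficient is `genG n k`. -/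
noncomputable def F (n : ℕ) : ℚ[X] :=
  ∏ i ∈ range n, (C (((i : ℚ) + 1)⁻¹) * X + 1)

lemma genG_eq_zero {n k : ℕ} (h : n < k) : genG n k = 0 := by
  have he : Finset.powersetCard k (Finset.range n) = ∅ :=
    Finset.powersetCard_eq_empty.2 (by simpa using h)
  simp [genG, he]

lemma coeff_F (n k : ℕ) : (F n).coeff k = genG n k := by
  rw [F, Finset.prod_add, Polynomial.finset_sum_coeff, genG,
    Finset.powersetCard_eq_filter, Finset.sum_filter]
  refine Finset.sum_congr rfl fun t _ => ?_
  rw [Finset.prod_const_one, mul_one, Finset.prod_mul_distrib, Finset.prod_const,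
    ← map_prod, Polynomial.coeff_C_mul, Polynomial.coeff_X_pow]
  rcases eq_or_ne t.card k with h | h
  · simp [h, one_div]
  · simp [h, Ne.symm h]

lemma natDegree_F_le (n : ℕ) : (F n).natDegree ≤ n := by
  refine le_trans (Polynomial.natDegree_prod_le _ _) ?_
  calc ∑ i ∈ range n, (C (((i : ℚ) + 1)⁻¹) * X + 1).natDegree
      ≤ ∑ _i ∈ range n, 1 := by
        refine Finset.sum_le_sum fun i _ => ?_
        refine le_trans (Polynomial.natDegree_add_le _ _) ?_
        simp only [natDegree_one, max_le_iff]
        exact ⟨le_trans (Polynomial.natDegree_C_mul_le _ _) (by simp), by simp⟩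
    _ = n := by simp

lemma F_as_sum (n : ℕ) : F n = ∑ k ∈ range (n + 1), C ((F n).coeff k) * X ^ k := by
  conv_lhs => rw [(F n).as_sum_range' (n + 1) (Nat.lt_succ_of_le (natDegree_F_le n))]
  exact Finset.sum_congr rfl fun k _ => (Polynomial.C_mul_X_pow_eq_monomial).symm

/-- The key auxiliary polynomial `g = ∑_j (B_j p^j / j!) • F^{(j)}`. -/
noncomputable def g (p n : ℕ) : ℚ[X] :=
  ∑ j ∈ range (n + 1), C (_root_.bernoulli j * (p : ℚ) ^ j / (Nat.factorial j : ℚ)) * derivative^[j] (F n)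

lemma coeff_g (p n m : ℕ) :
    (g p n).coeff m
      = ∑ j ∈ range (n + 1),
          _root_.bernoulli j * ((m + j).choose j : ℚ) * genG n (m + j) * (p : ℚ) ^ j := by
  rw [g, Polynomial.finset_sum_coeff]
  refine Finset.sum_congr rfl fun j _ => ?_
  have hj : ((Nat.factorial j : ℕ) : ℚ) ≠ 0 := by exact_mod_cast j.factorial_ne_zero
  rw [Polynomial.coeff_C_mul, Polynomial.coeff_iterate_derivative, nsmul_eq_mul, coeff_F,
    Nat.descFactorial_eq_factorial_mul_choose]
  push_cast
  field_simp

lemma g_eq (p n : ℕ) (hp : (p : ℚ) ≠ 0) :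
    g p n = ∑ k ∈ range (n + 1),
      C ((F n).coeff k * (p : ℚ) ^ k) *
        ((Polynomial.bernoulli k).comp (C ((p : ℚ))⁻¹ * X)) := by
  have h1 : ∀ j : ℕ, derivative^[j] (F n)
      = ∑ k ∈ range (n + 1), C ((F n).coeff k) * derivative^[j] (X ^ k : ℚ[X]) := by
    intro j
    conv_lhs => rw [F_as_sum n]
    rw [Polynomial.iterate_derivative_sum]
    exact Finset.sum_congr rfl fun k _ => Polynomial.iterate_derivative_C_mul _ _ _
  calc g p n
      = ∑ j ∈ range (n + 1), ∑ k ∈ range (n + 1),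
          C (_root_.bernoulli j * (p : ℚ) ^ j / (Nat.factorial j : ℚ)) *
            (C ((F n).coeff k) * derivative^[j] (X ^ k : ℚ[X])) := by
        rw [g]
        exact Finset.sum_congr rfl fun j _ => by rw [h1 j, Finset.mul_sum]
    _ = ∑ k ∈ range (n + 1), ∑ j ∈ range (n + 1),
          C (_root_.bernoulli j * (p : ℚ) ^ j / (Nat.factorial j : ℚ)) *
            (C ((F n).coeff k) * derivative^[j] (X ^ k : ℚ[X])) := Finset.sum_comm
    _ = _ := ?_
  refine Finset.sum_congr rfl fun k hk => ?_
  -- restrict the inner sum to `range (k+1)`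
  rw [← Finset.sum_subset (Finset.range_subset_range.2 (Nat.succ_le_succ
      (Nat.lt_succ_iff.1 (Finset.mem_range.1 hk))))
      (fun j _ hj => by
        rw [Polynomial.iterate_derivative_X_pow_eq_natCast_mul,
          Nat.descFactorial_eq_zero_iff_lt.2 (by simpa using hj)]
        simp)]
  rw [Polynomial.bernoulli, Polynomial.sum_comp, Finset.mul_sum]
  refine Finset.sum_congr rfl fun j hj => ?_
  have hjk : j ≤ k := Nat.lt_succ_iff.1 (Finset.mem_range.1 hj)
  have hfac : ((Nat.factorial j : ℕ) : ℚ) ≠ 0 := by exact_mod_cast j.factorial_ne_zero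
  refine Polynomial.funext fun x => ?_
  rw [Polynomial.iterate_derivative_X_pow_eq_natCast_mul, Polynomial.monomial_comp,
    Nat.descFactorial_eq_factorial_mul_choose,
    show ((p : ℚ)) ^ k = (p : ℚ) ^ j * (p : ℚ) ^ (k - j) from by
      rw [← pow_add, Nat.add_sub_cancel' hjk]]
  simp only [eval_mul, eval_C, eval_pow, eval_X, eval_natCast, Nat.cast_mul, mul_pow]
  field_simp
  have hpp : (p : ℚ) ^ (k - j) * (p : ℚ)⁻¹ ^ (k - j) = 1 := by
    rw [← mul_pow, mul_inv_cancel₀ hp, one_pow]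
  linear_combination (-(_root_.bernoulli j * (F n).coeff k * ((k.choose j : ℕ) : ℚ) * x ^ (k - j))) * hpp

lemma eval_derivative_F (n : ℕ) (x : ℚ) :
    (derivative (F n)).eval x
      = ∑ k ∈ range (n + 1), (F n).coeff k * k * x ^ (k - 1) := by
  conv_lhs => rw [F_as_sum n]
  rw [Polynomial.derivative_sum, Polynomial.eval_finset_sum]
  refine Finset.sum_congr rfl fun k _ => ?_
  rw [Polynomial.derivative_C_mul, Polynomial.derivative_X_pow]
  simp only [eval_mul, eval_C, eval_pow, eval_X, eval_natCast]
  ring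

lemma delta (p n : ℕ) (hp : (p : ℚ) ≠ 0) (x : ℚ) :
    (g p n).eval (x + p) = (g p n).eval x + p * (derivative (F n)).eval x := by
  rw [g_eq p n hp, eval_derivative_F, Polynomial.eval_finset_sum, Polynomial.eval_finset_sum,
    Finset.mul_sum, ← Finset.sum_add_distrib]
  refine Finset.sum_congr rfl fun k _ => ?_
  simp only [eval_mul, eval_C, eval_comp, eval_X]
  have h1 : ((p : ℚ))⁻¹ * (x + p) = 1 + (p : ℚ)⁻¹ * x := by field_simp; ring
  rw [h1, Polynomial.bernoulli_eval_one_add]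
  have h2 : (p : ℚ) ^ k * ((k : ℚ) * ((p : ℚ)⁻¹ * x) ^ (k - 1))
      = (p : ℚ) * ((k : ℚ) * x ^ (k - 1)) := by
    cases k with
    | zero => simp
    | succ m =>
      have h3 : (p : ℚ) ^ m * ((p : ℚ)⁻¹) ^ m = 1 := by
        rw [← mul_pow, mul_inv_cancel₀ hp, one_pow]
      rw [mul_pow]
      simp only [Nat.add_sub_cancel, pow_succ]
      calc (p : ℚ) ^ m * (p : ℚ) * ((m + 1 : ℕ) * ((p : ℚ)⁻¹ ^ m * x ^ m))
          = ((p : ℚ) ^ m * (p : ℚ)⁻¹ ^ m) * ((p : ℚ) * ((m + 1 : ℕ) * x ^ m)) := by ring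
        _ = (p : ℚ) * ((m + 1 : ℕ) * x ^ m) := by rw [h3, one_mul]
  calc (F n).coeff k * (p : ℚ) ^ k *
        ((Polynomial.bernoulli k).eval ((p : ℚ)⁻¹ * x) + (k : ℚ) * ((p : ℚ)⁻¹ * x) ^ (k - 1))
      = (F n).coeff k * (p : ℚ) ^ k * (Polynomial.bernoulli k).eval ((p : ℚ)⁻¹ * x)
        + (F n).coeff k * ((p : ℚ) ^ k * ((k : ℚ) * ((p : ℚ)⁻¹ * x) ^ (k - 1))) := by ring
    _ = _ := by rw [h2]; ring

lemma F_reflect (n : ℕ) (hn : Even n) :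
    (F n).comp (-(X + C ((n : ℚ) + 1))) = F n := by
  refine Polynomial.funext fun x => ?_
  rw [Polynomial.eval_comp]
  simp only [eval_neg, eval_add, eval_X, eval_C]
  rw [F, Polynomial.eval_prod, Polynomial.eval_prod]
  simp only [eval_add, eval_mul, eval_C, eval_X, eval_one]
  have hcast : ∀ i, i < n → (((n - 1 - i : ℕ) : ℚ)) = (n : ℚ) - 1 - i := by
    intro i hi'
    have h : n - 1 - i + (i + 1) = n := by omega
    have h2 := congrArg (fun m : ℕ => (m : ℚ)) h
    push_cast at h2
    linarith
  have hfac : ∀ i ∈ range n,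
      ((i : ℚ) + 1)⁻¹ * -(x + ((n : ℚ) + 1)) + 1
        = -1 * (((i : ℚ) + 1)⁻¹ * (x + (((n - 1 - i : ℕ) : ℚ)) + 1)) := by
    intro i hi
    have h0 : ((i : ℚ) + 1) ≠ 0 := by positivity
    rw [hcast i (Finset.mem_range.1 hi)]
    field_simp
    ring
  rw [Finset.prod_congr rfl hfac, Finset.prod_mul_distrib, Finset.prod_const,
    Finset.card_range, hn.neg_one_pow, one_mul]
  have hfac2 : ∀ i ∈ range n,
      ((i : ℚ) + 1)⁻¹ * x + 1 = ((i : ℚ) + 1)⁻¹ * (x + (i : ℚ) + 1) := by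
    intro i _
    have h0 : ((i : ℚ) + 1) ≠ 0 := by positivity
    field_simp
    ring
  rw [Finset.prod_congr rfl hfac2, Finset.prod_mul_distrib, Finset.prod_mul_distrib]
  congr 1
  exact Finset.prod_range_reflect (fun i => x + (i : ℚ) + 1) n

lemma iterate_derivative_comp_reflect (a : ℚ[X]) (c : ℚ) (j : ℕ) :
    derivative^[j] (a.comp (-(X + C c)))
      = C ((-1 : ℚ) ^ j) * (derivative^[j] a).comp (-(X + C c)) := by
  induction j with
  | zero => simp
  | succ j ih =>
    rw [Function.iterate_succ_apply', ih, Polynomial.derivative_C_mul,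
      Polynomial.derivative_comp]
    have hq : derivative (-(X + C c)) = C (-1 : ℚ) := by
      simp
    rw [hq, pow_succ, Polynomial.C_mul, ← Function.iterate_succ_apply' derivative]
    ring

lemma eval_iterate_derivative_reflect (p n : ℕ) (hn : Even n) (hpn : (p : ℚ) = n + 1)
    (j : ℕ) (x : ℚ) :
    (derivative^[j] (F n)).eval (-x)
      = (-1 : ℚ) ^ j * (derivative^[j] (F n)).eval (x - p) := by
  have h := congrArg (fun q => derivative^[j] q) (F_reflect n hn)
  rw [iterate_derivative_comp_reflect] at h
  have h2 := congrArg (Polynomial.eval (x - p)) h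
  simp only [eval_mul, eval_C, Polynomial.eval_comp, eval_neg, eval_add, eval_X] at h2
  have h3 : -(x - (p : ℚ) + ((n : ℚ) + 1)) = -x := by rw [← hpn]; ring
  rw [h3] at h2
  rcases Nat.even_or_odd j with he | ho
  · rw [he.neg_one_pow] at h2 ⊢
    linarith
  · rw [ho.neg_one_pow] at h2 ⊢
    linarith

lemma g_symm (p n : ℕ) (hn : Even n) (hn1 : 1 ≤ n) (hp0 : (p : ℚ) ≠ 0)
    (hpn : (p : ℚ) = n + 1) (x : ℚ) :
    (g p n).eval (-x) = (g p n).eval x := by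
  have e1 : (g p n).eval (-x)
      = ∑ j ∈ range (n + 1), (_root_.bernoulli j * (p : ℚ) ^ j / (Nat.factorial j : ℚ))
          * ((-1 : ℚ) ^ j * (derivative^[j] (F n)).eval (x - p)) := by
    rw [g, Polynomial.eval_finset_sum]
    refine Finset.sum_congr rfl fun j _ => ?_
    rw [eval_mul, eval_C, eval_iterate_derivative_reflect p n hn hpn]
  have e2 : (g p n).eval (x - p)
      = ∑ j ∈ range (n + 1), (_root_.bernoulli j * (p : ℚ) ^ j / (Nat.factorial j : ℚ))
          * (derivative^[j] (F n)).eval (x - p) := by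
    rw [g, Polynomial.eval_finset_sum]
    exact Finset.sum_congr rfl fun j _ => by rw [eval_mul, eval_C]
  have hsplit : ∑ j ∈ range (n + 1),
      ((_root_.bernoulli j * (p : ℚ) ^ j / (Nat.factorial j : ℚ))
          * ((-1 : ℚ) ^ j * (derivative^[j] (F n)).eval (x - p))
        - (_root_.bernoulli j * (p : ℚ) ^ j / (Nat.factorial j : ℚ))
          * (derivative^[j] (F n)).eval (x - p))
      = (p : ℚ) * (derivative (F n)).eval (x - p) := by
    rw [Finset.sum_eq_single 1]
    · rw [_root_.bernoulli_one]
      simp [Nat.factorial]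
      ring
    · intro j _ hne
      rcases Nat.even_or_odd j with he | ho
      · rw [he.neg_one_pow, one_mul, sub_self]
      · have hb : _root_.bernoulli j = 0 := by
          rw [bernoulli_eq_bernoulli'_of_ne_one hne]
          exact bernoulli'_eq_zero_of_odd ho (by
            rcases ho with ⟨m, rfl⟩
            omega)
        simp [hb]
    · intro h
      exact absurd (Finset.mem_range.2 (by omega)) h
  rw [Finset.sum_sub_distrib] at hsplit
  have e3 : (g p n).eval (-x)
      = (g p n).eval (x - p) + (p : ℚ) * (derivative (F n)).eval (x - p) := by
    rw [e1, e2]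
    linarith
  have e4 := delta p n hp0 (x - p)
  rw [sub_add_cancel] at e4
  rw [e3, ← e4]

lemma coeff_comp_C_mul_X (q : ℚ[X]) (a : ℚ) (m : ℕ) :
    (q.comp (C a * X)).coeff m = q.coeff m * a ^ m := by
  induction q using Polynomial.induction_on' with
  | add r s hr hs => simp [Polynomial.add_comp, hr, hs, add_mul]
  | monomial k c =>
    rw [Polynomial.monomial_comp, mul_pow, ← Polynomial.C_pow, ← mul_assoc,
      ← Polynomial.C_mul]
    rcases eq_or_ne k m with rfl | h
    · rw [Polynomial.coeff_monomial, if_pos rfl, Polynomial.coeff_C_mul,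
        Polynomial.coeff_X_pow, if_pos rfl, mul_one]
    · rw [Polynomial.coeff_monomial, if_neg h, Polynomial.coeff_C_mul,
        Polynomial.coeff_X_pow, if_neg (Ne.symm h)]
      simp

lemma coeff_g_odd_zero (p n m : ℕ) (hn : Even n) (hn1 : 1 ≤ n) (hp0 : (p : ℚ) ≠ 0)
    (hpn : (p : ℚ) = n + 1) (hm : Odd m) :
    (g p n).coeff m = 0 := by
  have hcomp : (g p n).comp (C (-1 : ℚ) * X) = g p n := by
    refine Polynomial.funext fun x => ?_
    rw [Polynomial.eval_comp]
    simp only [eval_mul, eval_C, eval_X, neg_one_mul]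
    exact g_symm p n hn hn1 hp0 hpn x
  have h := congrArg (fun q : ℚ[X] => q.coeff m) hcomp
  rw [coeff_comp_C_mul_X, hm.neg_one_pow, mul_neg_one] at h
  linarith

end BernoulliGenG

theorem bernoulli_genG_sum_eq_zero (p : ℕ) (hp : p.Prime) (hodd : Odd p)
    (i : ℕ) (hi : 1 ≤ i) :
    ∑ j ∈ Finset.range (p - 2 * i + 1),
      bernoulli j * ((j + 2 * i - 1).choose j) * genG (p - 1) (j + 2 * i - 1) * (p : ℚ) ^ j
      = 0 := by
  have hp2 := hp.two_le
  have hpodd : p % 2 = 1 := Nat.odd_iff.1 hodd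
  have hp3 : 3 ≤ p := by omega
  rcases lt_or_ge p (2 * i) with hbig | hle
  · -- degenerate case: the sum has a single vanishing term
    have h0 : p - 2 * i = 0 := by omega
    rw [h0, Finset.sum_range_one]
    have h1 : genG (p - 1) (2 * i - 1) = 0 :=
      BernoulliGenG.genG_eq_zero (by omega)
    simp [h1]
  · have h2ip : 2 * i < p := by omega
    set n := p - 1 with hn
    have hneven : Even n := by
      rcases hodd with ⟨m, hm⟩
      exact ⟨m, by omega⟩
    have hn1 : 1 ≤ n := by omega
    have hpn : (p : ℚ) = (n : ℚ) + 1 := by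
      have : n + 1 = p := by omega
      exact_mod_cast (congrArg (fun m : ℕ => (m : ℚ)) this).symm
    have hp0 : (p : ℚ) ≠ 0 := by positivity
    have key : ∑ j ∈ Finset.range (p - 2 * i + 1),
        bernoulli j * ((j + 2 * i - 1).choose j) * genG (p - 1) (j + 2 * i - 1) * (p : ℚ) ^ j
        = (BernoulliGenG.g p n).coeff (2 * i - 1) := by
      rw [BernoulliGenG.coeff_g p n (2 * i - 1)]
      rw [← Finset.sum_subset (Finset.range_subset_range.2 (show p - 2 * i + 1 ≤ n + 1 by omega))
        (fun j _ hj => by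
          have : n < 2 * i - 1 + j := by
            simp only [Finset.mem_range, not_lt] at hj
            omega
          rw [BernoulliGenG.genG_eq_zero this]
          simp)]
      refine Finset.sum_congr rfl fun j _ => ?_
      rw [show 2 * i - 1 + j = j + 2 * i - 1 by omega]
    rw [key]
    exact BernoulliGenG.coeff_g_odd_zero p n (2 * i - 1) hneven hn1 hp0 hpn
      ⟨i - 1, by omega⟩
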